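/- Let k be a field of characteristic zero, let a, b, m ≥ 1 with gcd(a, b) = 1, let c, d ≥ 0, and let F ∈ k[[x,y]] be a nonzero power series such that x does not divide F, y does not divide F, and x^c y^d F has no nonzero monomial that is a power of x^a y^b. Set r = ord(F), and let F₁(x, y) = F(x, xy)/x^r ∈ k[[x,y]] (the series F(x, xy) is divisible by x^r). Then: (1) ord(F₁) ≤ r; and (2) x^{c+d+r} y^d F₁ has no nonzero monomial that is a power of x^{a+b} y^b. Consequently, for u = (x^a y^b)^m and v = P(x^a y^b) + x^c y^d F, the quadratic substitution x ↦ x, y ↦ xy sends u to (x^{a+b} y^b)^m and v to P(x^{a+b} y^b) + x^{c+d+r} y^d F₁. -/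

import Mathlib

noncomputable section

/-- The order (minimal total degree of a monomial with nonzero coefficient) of a
two-variable formal power series, as an extended natural number. -/
def ordm {k : Type*} [Field k] (F : MvPowerSeries (Fin 2) k) : ℕ∞ :=
  sInf {n : ℕ∞ | ∃ d : Fin 2 →₀ ℕ, MvPowerSeries.coeff d F ≠ 0 ∧ n = ((d 0 + d 1 : ℕ) : ℕ∞)}

/-- Coefficientwise continuity of a `k`-algebra endomorphism of `k[[x,y]]`. -/
def CoeffCont {k : Type*} [Field k]
    (φ : MvPowerSeries (Fin 2) k →ₐ[k] MvPowerSeries (Fin 2) k) : Prop :=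
  ∀ (d : Fin 2 →₀ ℕ) (F G : MvPowerSeries (Fin 2) k),
    (∀ e : Fin 2 →₀ ℕ, e 0 + e 1 ≤ d 0 + d 1 →
      MvPowerSeries.coeff e F = MvPowerSeries.coeff e G) →
    MvPowerSeries.coeff d (φ F) = MvPowerSeries.coeff d (φ G)

open Classical in
/-- The power series `p(x^a y^b)` obtained by substituting the monomial `x^a y^b` into a
one-variable power series `p`. -/
def pevm {k : Type*} [Field k] (a b : ℕ) (p : PowerSeries k) : MvPowerSeries (Fin 2) k :=
  fun d => if h : ∃ t : ℕ, d 0 = t * a ∧ d 1 = t * b then PowerSeries.coeff h.choose p else 0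

namespace QuadAux
open MvPowerSeries Finsupp

variable {k : Type*} [Field k]

lemma fin2_decomp (e : Fin 2 →₀ ℕ) : e = single 0 (e 0) + single 1 (e 1) := by
  ext i
  fin_cases i <;> simp [Finsupp.single_apply]

@[simp] lemma app0 (p q : ℕ) : ((single 0 p + single 1 q : Fin 2 →₀ ℕ)) 0 = p := by
  simp [Finsupp.single_apply]

@[simp] lemma app1 (p q : ℕ) : ((single 0 p + single 1 q : Fin 2 →₀ ℕ)) 1 = q := by
  simp [Finsupp.single_apply]

lemma finsupp_eq_iff (e : Fin 2 →₀ ℕ) (p q : ℕ) :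
    e = single 0 p + single 1 q ↔ e 0 = p ∧ e 1 = q := by
  constructor
  · rintro rfl; simp
  · rintro ⟨h0, h1⟩; rw [fin2_decomp e, h0, h1]

lemma monomial_eq (p q : ℕ) (a : k) :
    (monomial (single 0 p + single 1 q) a : MvPowerSeries (Fin 2) k)
      = C a * X 0 ^ p * X 1 ^ q := by
  rw [X_pow_eq, X_pow_eq, show (C a : MvPowerSeries (Fin 2) k) = monomial 0 a from rfl,
    monomial_mul_monomial, monomial_mul_monomial]
  simp

/-- The key coefficient formula for the quadratic substitution. -/
lemma coeff_phi (φ : MvPowerSeries (Fin 2) k →ₐ[k] MvPowerSeries (Fin 2) k)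
    (hφc : CoeffCont φ)
    (hφ0 : φ (X 0) = X 0) (hφ1 : φ (X 1) = X 0 * X 1)
    (G : MvPowerSeries (Fin 2) k) (e : Fin 2 →₀ ℕ) :
    coeff e (φ G) =
      if e 1 ≤ e 0 then coeff (single 0 (e 0 - e 1) + single 1 (e 1)) G else 0 := by
  classical
  set N := e 0 + e 1 with hN
  set S := Finset.range (N + 1) ×ˢ Finset.range (N + 1) with hS
  set G' : MvPowerSeries (Fin 2) k :=
    ∑ pq ∈ S, monomial (single 0 pq.1 + single 1 pq.2)
      (coeff (single 0 pq.1 + single 1 pq.2) G) with hG'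
  have hcoe : ∀ f : Fin 2 →₀ ℕ, f 0 + f 1 ≤ N → coeff f G' = coeff f G := by
    intro f hf
    rw [hG', map_sum]
    rw [Finset.sum_eq_single (f 0, f 1)]
    · rw [coeff_monomial, if_pos (fin2_decomp f)]
      exact congrArg (fun x => coeff x G) (fin2_decomp f).symm
    · rintro ⟨p, q⟩ _ hne
      rw [coeff_monomial, if_neg]
      intro h
      exact hne (by rw [finsupp_eq_iff] at h; simp [h.1, h.2])
    · intro hmem
      exact absurd (by simp [hS]; omega) hmem
  have hkey : coeff e (φ G) = coeff e (φ G') :=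
    hφc e G G' (fun f hf => (hcoe f hf).symm)
  have hφG' : φ G' = ∑ pq ∈ S,
      monomial (single 0 (pq.1 + pq.2) + single 1 pq.2)
        (coeff (single 0 pq.1 + single 1 pq.2) G) := by
    rw [hG', map_sum]
    refine Finset.sum_congr rfl fun pq _ => ?_
    have hC : ∀ a : k, φ (C a) = C a := fun a => by
      simpa [MvPowerSeries.algebraMap_apply] using φ.commutes a
    rw [monomial_eq, monomial_eq, map_mul, map_mul, map_pow, map_pow, hφ0, hφ1, hC,
      mul_pow, pow_add]
    ring
  rw [hkey, hφG', map_sum]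
  by_cases hle : e 1 ≤ e 0
  · rw [if_pos hle, Finset.sum_eq_single (e 0 - e 1, e 1)]
    · rw [coeff_monomial, if_pos]
      rw [finsupp_eq_iff]
      constructor
      · simpa using (Nat.sub_add_cancel hle).symm
      · simp
    · rintro ⟨p, q⟩ _ hne
      rw [coeff_monomial, if_neg]
      intro h
      rw [finsupp_eq_iff] at h
      simp only at h
      exact hne (by simp only [Prod.mk.injEq]; omega)
    · intro hmem
      exact absurd (by simp [hS]; omega) hmem
  · rw [if_neg hle, Finset.sum_eq_zero]
    rintro ⟨p, q⟩ _
    rw [coeff_monomial, if_neg]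
    intro h
    rw [finsupp_eq_iff] at h
    simp only at h
    omega

lemma ordm_le {F : MvPowerSeries (Fin 2) k} {e : Fin 2 →₀ ℕ}
    (he : MvPowerSeries.coeff e F ≠ 0) : ordm F ≤ ((e 0 + e 1 : ℕ) : ℕ∞) :=
  sInf_le ⟨e, he, rfl⟩

lemma coeff_eq_zero_of_lt {F : MvPowerSeries (Fin 2) k} {r : ℕ} (hr : ordm F = (r : ℕ∞))
    {e : Fin 2 →₀ ℕ} (h : e 0 + e 1 < r) : MvPowerSeries.coeff e F = 0 := by
  by_contra hc
  have := ordm_le hc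
  rw [hr, Nat.cast_le] at this
  omega

lemma exists_ordm {F : MvPowerSeries (Fin 2) k} {r : ℕ} (hr : ordm F = (r : ℕ∞)) :
    ∃ e : Fin 2 →₀ ℕ, MvPowerSeries.coeff e F ≠ 0 ∧ e 0 + e 1 = r := by
  by_contra hc
  push_neg at hc
  have hlb : ((r + 1 : ℕ) : ℕ∞) ≤ ordm F := by
    apply le_sInf
    rintro n ⟨e, he, rfl⟩
    have h1 : r ≤ e 0 + e 1 := by
      have := ordm_le he
      rwa [hr, Nat.cast_le] at this
    have h2 : e 0 + e 1 ≠ r := hc e he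
    exact_mod_cast by omega
  rw [hr] at hlb
  exact absurd (Nat.cast_le.mp hlb) (by omega)

/-- Coefficient of a dite-defined `pevm` at a point where a witness is known. -/
lemma pevm_coeff {a b : ℕ} (hb : 1 ≤ b) (p : PowerSeries k) (e : Fin 2 →₀ ℕ) (t : ℕ)
    (h1 : e 0 = t * a) (h2 : e 1 = t * b) :
    MvPowerSeries.coeff e (pevm a b p) = PowerSeries.coeff t p := by
  rw [MvPowerSeries.coeff_apply]
  unfold pevm
  have h : ∃ t : ℕ, e 0 = t * a ∧ e 1 = t * b := ⟨t, h1, h2⟩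
  rw [dif_pos h]
  have hct : h.choose = t := by
    have hcs := h.choose_spec.2
    have h3 : h.choose * b = t * b := by rw [← hcs]; exact h2
    exact Nat.eq_of_mul_eq_mul_right hb h3
  rw [hct]

lemma pevm_coeff_zero {a b : ℕ} (p : PowerSeries k) (e : Fin 2 →₀ ℕ)
    (h : ¬ ∃ t : ℕ, e 0 = t * a ∧ e 1 = t * b) :
    MvPowerSeries.coeff e (pevm a b p) = 0 := by
  rw [MvPowerSeries.coeff_apply]
  unfold pevm
  rw [dif_neg h]

end QuadAux

open MvPowerSeries Finsupp QuadAux in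
/-- behaviour of a normalized presentation
`u = (x^a y^b)^m`, `v = P(x^a y^b) + x^c y^d F` under the quadratic substitution
`x ↦ x, y ↦ xy`: with `r = ord F`, `F(x, xy)` is divisible by `x^r`, and writing
`F(x, xy) = x^r F₁` one has `ord F₁ ≤ r`, the product `x^{c+d+r} y^d F₁` has no nonzero
monomial which is a power of `x^{a+b} y^b`, and the substitution sends `u` to
`(x^{a+b} y^b)^m` and `v` to `P(x^{a+b} y^b) + x^{c+d+r} y^d F₁`. -/
theorem quadSubst_of_normalized_two_point_form
    (k : Type*) [Field k] [CharZero k]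
    (a b m c d : ℕ) (ha : 1 ≤ a) (hb : 1 ≤ b) (hm : 1 ≤ m) (hab : Nat.gcd a b = 1)
    (F : MvPowerSeries (Fin 2) k) (hF : F ≠ 0)
    (hx : ¬ MvPowerSeries.X 0 ∣ F) (hy : ¬ MvPowerSeries.X 1 ∣ F)
    (hnorm : ∀ i j : ℕ, (∃ t : ℕ, c + i = t * a ∧ d + j = t * b) →
      MvPowerSeries.coeff (Finsupp.single 0 i + Finsupp.single 1 j) F = 0)
    (r : ℕ) (hr : ordm F = (r : ℕ∞))
    (P : PowerSeries k)
    (φ : MvPowerSeries (Fin 2) k →ₐ[k] MvPowerSeries (Fin 2) k)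
    (hφc : CoeffCont φ)
    (hφ0 : φ (MvPowerSeries.X 0) = MvPowerSeries.X 0)
    (hφ1 : φ (MvPowerSeries.X 1) = MvPowerSeries.X 0 * MvPowerSeries.X 1) :
    (∃ F₁ : MvPowerSeries (Fin 2) k, φ F = MvPowerSeries.X 0 ^ r * F₁) ∧
    ∀ F₁ : MvPowerSeries (Fin 2) k, φ F = MvPowerSeries.X 0 ^ r * F₁ →
      ordm F₁ ≤ (r : ℕ∞) ∧
      (∀ i j : ℕ, (∃ t : ℕ, (c + d + r) + i = t * (a + b) ∧ d + j = t * b) →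
        MvPowerSeries.coeff (Finsupp.single 0 i + Finsupp.single 1 j) F₁ = 0) ∧
      φ ((MvPowerSeries.X 0 ^ a * MvPowerSeries.X 1 ^ b) ^ m) =
        (MvPowerSeries.X 0 ^ (a + b) * MvPowerSeries.X 1 ^ b) ^ m ∧
      φ (pevm a b P + MvPowerSeries.X 0 ^ c * MvPowerSeries.X 1 ^ d * F) =
        pevm (a + b) b P +
          MvPowerSeries.X 0 ^ (c + d + r) * MvPowerSeries.X 1 ^ d * F₁ := by
  have hcoeff := coeff_phi φ hφc hφ0 hφ1
  constructor
  · -- existence: X 0 ^ r divides φ F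
    have hdvd : MvPowerSeries.X (0 : Fin 2) ^ r ∣ φ F := by
      rw [MvPowerSeries.X_pow_dvd_iff]
      intro e he
      rw [hcoeff F e]
      by_cases hle : e 1 ≤ e 0
      · rw [if_pos hle]
        exact coeff_eq_zero_of_lt hr (by simp; omega)
      · rw [if_neg hle]
    exact hdvd
  · intro F₁ hEq
    -- coefficient formula for F₁
    have hF₁ : ∀ f : Fin 2 →₀ ℕ, MvPowerSeries.coeff f F₁ =
        MvPowerSeries.coeff (Finsupp.single 0 r + f) (φ F) := by
      intro f
      have h := MvPowerSeries.coeff_add_monomial_mul (m := Finsupp.single (0 : Fin 2) r)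
        (n := f) (φ := F₁) (1 : k)
      rw [one_mul] at h
      rw [hEq, X_pow_eq, h]
    have happ0 : ∀ f : Fin 2 →₀ ℕ, (Finsupp.single (0 : Fin 2) r + f) 0 = r + f 0 := by
      intro f; simp
    have happ1 : ∀ f : Fin 2 →₀ ℕ, (Finsupp.single (0 : Fin 2) r + f) 1 = f 1 := by
      intro f; simp [Finsupp.single_apply]
    refine ⟨?_, ?_, ?_, ?_⟩
    · -- ordm F₁ ≤ r
      obtain ⟨e, he, hesum⟩ := exists_ordm hr
      have h1 : MvPowerSeries.coeff (Finsupp.single 1 (e 1) : Fin 2 →₀ ℕ) F₁ ≠ 0 := by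
        rw [hF₁, hcoeff]
        have hv0 : ((Finsupp.single 0 r + Finsupp.single 1 (e 1) : Fin 2 →₀ ℕ)) 0 = r := by
          simp
        have hv1 : ((Finsupp.single 0 r + Finsupp.single 1 (e 1) : Fin 2 →₀ ℕ)) 1 = e 1 := by
          simp [Finsupp.single_apply]
        rw [hv0, hv1, if_pos (by omega), show r - e 1 = e 0 from by omega, ← fin2_decomp]
        exact he
      have := ordm_le h1
      refine le_trans this ?_
      rw [Nat.cast_le]
      simp [Finsupp.single_apply]
      omega
    · -- normalization
      intro i j ⟨t, ht1, ht2⟩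
      have hd : t * a + t * b = t * (a + b) := by ring
      rw [hF₁, hcoeff]
      set g := Finsupp.single (0:Fin 2) r + (Finsupp.single 0 i + Finsupp.single 1 j)
        with hg
      have hg0 : g 0 = r + i := by rw [hg, happ0, app0]
      have hg1 : g 1 = j := by rw [hg, happ1, app1]
      rw [hg0, hg1]
      by_cases hle : j ≤ r + i
      · rw [if_pos hle]
        exact hnorm _ _ ⟨t, by omega, ht2⟩
      · rw [if_neg hle]
    · -- image of u
      rw [map_pow, map_mul, map_pow, map_pow, hφ0, hφ1]
      ring
    · -- image of v
      rw [map_add, map_mul, map_mul, map_pow, map_pow, hφ0, hφ1]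
      congr 1
      · -- φ (pevm a b P) = pevm (a+b) b P
        apply MvPowerSeries.ext
        intro e
        rw [hcoeff]
        by_cases hR : ∃ t : ℕ, e 0 = t * (a + b) ∧ e 1 = t * b
        · obtain ⟨t, h1, h2⟩ := hR
          have hd1 : t * a + t * b = t * (a + b) := by ring
          have hle : e 1 ≤ e 0 := by rw [h1, h2]; exact Nat.mul_le_mul_left t (by omega)
          rw [if_pos hle]
          rw [pevm_coeff hb P _ t (by rw [app0]; omega) (by rw [app1]; exact h2),
            pevm_coeff hb P e t h1 h2]
        · rw [pevm_coeff_zero P e hR]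
          by_cases hle : e 1 ≤ e 0
          · rw [if_pos hle]
            apply pevm_coeff_zero
            rintro ⟨t, h1, h2⟩
            have hd2 : t * a + t * b = t * (a + b) := by ring
            rw [app0] at h1
            rw [app1] at h2
            exact hR ⟨t, by omega, h2⟩
          · rw [if_neg hle]
      · -- monomial part
        rw [hEq]
        ring

end
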